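/- Let m ≥ 2 be an integer and c > 0 a real number. Then there exist real numbers a₀, a₁, ..., a_{m−2} such that for every real x, (−1)^m · (1+c)^m · T_m( (−cos x − c)/(1+c) ) = ∑_{j=0}^{m−2} a_j cos(jx) + 2mc·cos((m−1)x) + cos(mx). -/

import Mathlib

open Real Polynomial

noncomputable def fcheb (c : ℝ) (m : ℕ) (x : ℝ) : ℝ :=
  (-1 : ℝ) ^ m * (1 + c) ^ m *
    (Polynomial.Chebyshev.T ℝ (m : ℤ)).eval ((-Real.cos x - c) / (1 + c))

def TP (n : ℕ) (g : ℝ → ℝ) : Prop :=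
  ∃ a : ℕ → ℝ, ∀ x, g x = ∑ j ∈ Finset.range n, a j * Real.cos ((j : ℝ) * x)

lemma TP_congr {n g h} (hgh : ∀ x, g x = h x) (hh : TP n h) : TP n g := by
  obtain ⟨a, ha⟩ := hh; exact ⟨a, fun x => (hgh x).trans (ha x)⟩

lemma TP_zero (n : ℕ) : TP n (fun _ => 0) :=
  ⟨fun _ => 0, fun x => by simp⟩

lemma TP_add {n g h} (hg : TP n g) (hh : TP n h) : TP n (fun x => g x + h x) := by
  obtain ⟨a, ha⟩ := hg; obtain ⟨b, hb⟩ := hh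
  exact ⟨fun j => a j + b j, fun x => by
    simp only [ha x, hb x, ← Finset.sum_add_distrib, add_mul]⟩

lemma TP_smul {n g} (r : ℝ) (hg : TP n g) : TP n (fun x => r * g x) := by
  obtain ⟨a, ha⟩ := hg
  exact ⟨fun j => r * a j, fun x => by
    simp only [ha x, Finset.mul_sum, mul_assoc]⟩

lemma TP_mono {n n' g} (h : n ≤ n') (hg : TP n g) : TP n' g := by
  obtain ⟨a, ha⟩ := hg
  refine ⟨fun j => if j < n then a j else 0, fun x => ?_⟩
  rw [ha x, ← Finset.sum_subset (Finset.range_subset_range.mpr h)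
    (fun j _ hj => by
      have : ¬ j < n := fun hlt => hj (Finset.mem_range.mpr hlt)
      simp [this])]
  exact Finset.sum_congr rfl fun j hj => by simp [Finset.mem_range.mp hj]

lemma TP_cos {n k : ℕ} (h : k < n) : TP n (fun x => Real.cos ((k : ℝ) * x)) := by
  refine ⟨fun j => if j = k then 1 else 0, fun x => ?_⟩
  rw [Finset.sum_congr rfl (fun j _ => by
    rw [ite_mul, one_mul, zero_mul] :
      ∀ j ∈ Finset.range n, (if j = k then (1:ℝ) else 0) * Real.cos ((j:ℝ)*x)
        = if j = k then Real.cos ((j:ℝ)*x) else 0)]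
  simp [Finset.sum_ite_eq' (Finset.range n) k, Finset.mem_range.mpr h]

lemma TP_sum {n : ℕ} {ι : Type*} (s : Finset ι) (F : ι → ℝ → ℝ)
    (h : ∀ j ∈ s, TP n (F j)) : TP n (fun x => ∑ j ∈ s, F j x) := by
  classical
  induction s using Finset.cons_induction with
  | empty => exact TP_congr (fun x => by simp) (TP_zero n)
  | cons i s his ih =>
      refine TP_congr (fun x => Finset.sum_cons his) ?_
      exact TP_add (h i (Finset.mem_cons_self i s))
        (ih fun j hj => h j (Finset.mem_cons_of_mem hj))

lemma cos_mul_cos_nat (j : ℕ) (x : ℝ) :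
    Real.cos x * Real.cos (((j+1 : ℕ) : ℝ) * x)
      = 1/2 * Real.cos (((j+2 : ℕ) : ℝ) * x) + 1/2 * Real.cos ((j : ℝ) * x) := by
  have h1 : ((j+2 : ℕ) : ℝ) * x = ((j+1 : ℕ) : ℝ) * x + x := by push_cast; ring
  have h2 : ((j : ℕ) : ℝ) * x = ((j+1 : ℕ) : ℝ) * x - x := by push_cast; ring
  rw [h1, h2, Real.cos_add, Real.cos_sub]; ring

lemma TP_cos_mul {n g} (hg : TP n g) : TP (n+1) (fun x => Real.cos x * g x) := by
  obtain ⟨a, ha⟩ := hg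
  refine TP_congr (fun x => by rw [ha x, Finset.mul_sum]) ?_
  refine TP_sum _ _ fun j hj => ?_
  have hj' := Finset.mem_range.mp hj
  refine TP_congr (fun x => by ring_nf :
    ∀ x, Real.cos x * (a j * Real.cos ((j:ℝ)*x))
      = a j * (Real.cos x * Real.cos ((j:ℝ)*x))) ?_
  refine TP_smul _ ?_
  match j, hj' with
  | 0, _ =>
      refine TP_congr (fun x => by simp) (TP_mono ?_ (TP_cos (n := 2) (k := 1) one_lt_two))
      omega
  | (i+1), hi =>
      refine TP_congr (fun x => cos_mul_cos_nat i x) ?_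
      refine TP_add (TP_smul _ (TP_cos ?_)) (TP_smul _ (TP_cos ?_)) <;> omega

lemma fcheb_rec (c : ℝ) (hc : 0 < c) (m : ℕ) (x : ℝ) :
    fcheb c (m+2) x = 2 * (Real.cos x + c) * fcheb c (m+1) x
      - (1 + c)^2 * fcheb c m x := by
  have h1c : (1 + c) ≠ 0 := by linarith
  have hT : Polynomial.Chebyshev.T ℝ ((m+2 : ℕ) : ℤ)
      = 2 * X * Polynomial.Chebyshev.T ℝ ((m+1 : ℕ) : ℤ)
        - Polynomial.Chebyshev.T ℝ (m : ℤ) := by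
    push_cast
    exact Polynomial.Chebyshev.T_add_two ℝ (m : ℤ)
  unfold fcheb
  rw [hT]
  simp only [eval_sub, eval_mul, eval_ofNat, eval_X]
  field_simp
  ring

lemma fcheb_two (c : ℝ) (hc : 0 < c) (x : ℝ) :
    fcheb c 2 x = (c^2 - 2*c) + 2*2*c * Real.cos (1 * x) + Real.cos (2 * x) := by
  have h1c : (1 + c) ≠ 0 := by linarith
  unfold fcheb
  rw [show ((2:ℕ):ℤ) = 2 by norm_num, Polynomial.Chebyshev.T_two]
  have h2 : Real.cos (2 * x) = 2 * Real.cos x ^ 2 - 1 := Real.cos_two_mul x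
  simp only [eval_sub, eval_mul, eval_ofNat, eval_pow, eval_X, eval_one]
  rw [h2]
  field_simp
  ring

lemma fcheb_three (c : ℝ) (hc : 0 < c) (x : ℝ) :
    fcheb c 3 x = ((c^3 - 6*c^2 + 3*c) + (9*c^2 - 6*c) * Real.cos (1 * x))
      + 2*3*c * Real.cos (2 * x) + Real.cos (3 * x) := by
  have h1c : (1 + c) ≠ 0 := by linarith
  have hT : Polynomial.Chebyshev.T ℝ ((3:ℕ) : ℤ)
      = 2 * X * Polynomial.Chebyshev.T ℝ 2 - Polynomial.Chebyshev.T ℝ 1 := by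
    rw [show ((3:ℕ):ℤ) = (1:ℤ)+2 by norm_num]
    exact Polynomial.Chebyshev.T_add_two ℝ 1
  unfold fcheb
  rw [hT, Polynomial.Chebyshev.T_two, Polynomial.Chebyshev.T_one]
  have h2 : Real.cos (2 * x) = 2 * Real.cos x ^ 2 - 1 := Real.cos_two_mul x
  have h3 : Real.cos (3 * x) = 4 * Real.cos x ^ 3 - 3 * Real.cos x := Real.cos_three_mul x
  simp only [eval_sub, eval_mul, eval_ofNat, eval_pow, eval_X, eval_one]
  rw [h2, h3]
  field_simp
  ring

lemma TP_cos' {n : ℕ} (r : ℝ) (k : ℕ) (h : k < n) (hr : r = (k : ℝ)) :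
    TP n (fun x => Real.cos (r * x)) :=
  TP_congr (fun x => by rw [hr]) (TP_cos h)

def Pc (c : ℝ) (k : ℕ) : Prop :=
  ∃ g, TP (k+1) g ∧ ∀ x, fcheb c (k+2) x
    = g x + 2*((k:ℝ)+2)*c*Real.cos (((k:ℝ)+1)*x) + Real.cos (((k:ℝ)+2)*x)

lemma Pc_zero (c : ℝ) (hc : 0 < c) : Pc c 0 := by
  refine ⟨fun _ => c^2 - 2*c, ⟨fun _ => c^2 - 2*c, fun x => by simp⟩, fun x => ?_⟩
  have := fcheb_two c hc x
  norm_num at this ⊢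
  linarith [this]

lemma Pc_one (c : ℝ) (hc : 0 < c) : Pc c 1 := by
  refine ⟨fun x => (c^3 - 6*c^2 + 3*c) + (9*c^2 - 6*c) * Real.cos (1 * x), ?_, fun x => ?_⟩
  · refine TP_add (TP_congr (fun x => by simp)
      (TP_smul (c^3 - 6*c^2 + 3*c) (TP_cos (n := 2) (k := 0) (by norm_num)))) ?_
    exact TP_smul _ (TP_cos' 1 1 one_lt_two (by norm_num))
  · have := fcheb_three c hc x
    norm_num at this ⊢
    linarith [this]

lemma Pc_step (c : ℝ) (hc : 0 < c) (k : ℕ) (h1 : Pc c k) (h2 : Pc c (k+1)) :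
    Pc c (k+2) := by
  obtain ⟨g1, hg1, he1⟩ := h1
  obtain ⟨g2, hg2, he2⟩ := h2
  set K : ℝ := (k : ℝ) with hK
  refine ⟨fun x => 2*(Real.cos x * g2 x) + ((2*c)*(g2 x)
      + ((1 + 4*(K+3)*c^2 - (1+c)^2) * Real.cos ((K+2)*x)
      + ((2*(K+3)*c - (1+c)^2*(2*(K+2)*c)) * Real.cos ((K+1)*x)
      + (-(1+c)^2)*(g1 x)))), ?_, fun x => ?_⟩
  · refine TP_add (TP_smul 2 (TP_cos_mul hg2)) (TP_add (TP_smul _ (TP_mono (by omega) hg2))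
      (TP_add (TP_smul _ (TP_cos' _ (k+2) (by omega) (by push_cast; ring)))
      (TP_add (TP_smul _ (TP_cos' _ (k+1) (by omega) (by push_cast; ring)))
      (TP_smul _ (TP_mono (by omega) hg1)))))
  · have hrec := fcheb_rec c hc (k+2) x
    have he2' := he2 x
    have he1' := he1 x
    push_cast at he2' he1' ⊢
    simp only [show ((k:ℝ)+1+1) = K+2 from by rw [hK]; ring,
      show ((k:ℝ)+1+2) = K+3 from by rw [hK]; ring,
      show ((k:ℝ)+2+1) = K+3 from by rw [hK]; ring,
      show ((k:ℝ)+2+2) = K+4 from by rw [hK]; ring,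
      show ((k:ℝ)+2) = K+2 from by rw [hK],
      show (K+2+1) = K+3 from by ring, show (K+2+2) = K+4 from by ring] at he2' he1' ⊢
    have hp1 : 2*Real.cos x*Real.cos ((K+3)*x) = Real.cos ((K+4)*x) + Real.cos ((K+2)*x) := by
      have e1 : (K+4)*x = (K+3)*x + x := by ring
      have e2 : (K+2)*x = (K+3)*x - x := by ring
      rw [e1, e2, Real.cos_add, Real.cos_sub]; ring
    have hp2 : 2*Real.cos x*Real.cos ((K+2)*x) = Real.cos ((K+3)*x) + Real.cos ((K+1)*x) := by
      have e1 : (K+3)*x = (K+2)*x + x := by ring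
      have e2 : (K+1)*x = (K+2)*x - x := by ring
      rw [e1, e2, Real.cos_add, Real.cos_sub]; ring
    show fcheb c (k+2+2) x = _
    linear_combination hrec + 2*(Real.cos x + c)*he2' - (1+c)^2*he1' + hp1 + 2*(K+3)*c*hp2

lemma Pc_all (c : ℝ) (hc : 0 < c) : ∀ k, Pc c k := by
  have h : ∀ k, Pc c k ∧ Pc c (k+1) := by
    intro k
    induction k with
    | zero => exact ⟨Pc_zero c hc, Pc_one c hc⟩
    | succ n ih => exact ⟨ih.2, Pc_step c hc n ih.1 ih.2⟩
  exact fun k => (h k).1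

theorem chebyshev_composition_cosine_expansion (m : ℕ) (hm : 2 ≤ m) (c : ℝ) (hc : 0 < c) :
    ∃ a : ℕ → ℝ, ∀ x : ℝ,
      (-1 : ℝ) ^ m * (1 + c) ^ m *
          (Polynomial.Chebyshev.T ℝ (m : ℤ)).eval ((-Real.cos x - c) / (1 + c))
        = (∑ j ∈ Finset.range (m - 1), a j * Real.cos ((j : ℝ) * x))
          + 2 * m * c * Real.cos (((m : ℝ) - 1) * x) + Real.cos ((m : ℝ) * x) := by
  obtain ⟨k, rfl⟩ : ∃ k, m = k + 2 := ⟨m - 2, by omega⟩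
  obtain ⟨g, ⟨a, ha⟩, he⟩ := Pc_all c hc k
  refine ⟨a, fun x => ?_⟩
  have h1 : (-1 : ℝ) ^ (k+2) * (1 + c) ^ (k+2) *
      (Polynomial.Chebyshev.T ℝ ((k+2 : ℕ) : ℤ)).eval ((-Real.cos x - c) / (1 + c))
      = fcheb c (k+2) x := rfl
  rw [h1, he x, ha x]
  have h2 : ((k:ℝ) + 2) - 1 = (k:ℝ) + 1 := by ring
  push_cast [h2]
  ring
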